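/- Every even lattice Λ of rank two with even determinant and signature (1,1) admits a primitive embedding into the lattice Σ_r = ⟨2⟩ ⊕ ⟨-2⟩^r for some positive integer r ≤ 6. -/

import Mathlib

private def Pr (w w' : Fin 7 → ℤ) : ℤ :=
  2 * w 0 * w' 0 - 2 * ∑ i : Fin 6, w i.succ * w' i.succ

private theorem sum6' (A B : Fin 7 → ℤ) :
    ∑ i : Fin 6, A i.succ * B i.succ =
      A 1*B 1 + A 2*B 2 + A 3*B 3 + A 4*B 4 + A 5*B 5 + A 6*B 6 := by
  rw [Fin.sum_univ_six]; rfl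

private theorem sum6e (ex fx ey fy : ℤ) (u v : Fin 7 → ℤ) :
    ∑ i : Fin 6, (ex * u i.succ + fx * v i.succ) * (ey * u i.succ + fy * v i.succ) =
      (ex*u 1 + fx*v 1)*(ey*u 1 + fy*v 1) + (ex*u 2 + fx*v 2)*(ey*u 2 + fy*v 2)
      + (ex*u 3 + fx*v 3)*(ey*u 3 + fy*v 3) + (ex*u 4 + fx*v 4)*(ey*u 4 + fy*v 4)
      + (ex*u 5 + fx*v 5)*(ey*u 5 + fy*v 5) + (ex*u 6 + fx*v 6)*(ey*u 6 + fy*v 6) := by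
  rw [Fin.sum_univ_six]; rfl

private theorem Pr_bilin (u v : Fin 7 → ℤ) (ex fx ey fy : ℤ) :
    Pr (fun j => ex * u j + fx * v j) (fun j => ey * u j + fy * v j)
      = ex*ey*(Pr u u) + (ex*fy + fx*ey)*(Pr u v) + fx*fy*(Pr v v) := by
  simp only [Pr, sum6e, sum6']
  ring

private theorem ev5 (a b c d e f g : ℤ) : (![a,b,c,d,e,f,g] : Fin 7 → ℤ) 5 = f := rfl
private theorem ev6 (a b c d e f g : ℤ) : (![a,b,c,d,e,f,g] : Fin 7 → ℤ) 6 = g := rfl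

private theorem exists_neg_val (a b c : ℤ) (h : a*b < c^2) :
    ∃ p q s t : ℤ, p*t - q*s = 1 ∧ a*p^2 + 2*c*(p*q) + b*q^2 < 0 := by
  rcases lt_or_ge b 0 with hb | hb
  · exact ⟨0, 1, -1, 0, by ring, by linarith [sq_nonneg (0:ℤ)]⟩
  rcases lt_trichotomy a 0 with ha | ha | ha
  · exact ⟨1, 0, 0, 1, by ring, by nlinarith⟩
  · have hc : c^2 ≥ 1 := by nlinarith
    refine ⟨-c*(b+1), 1, -1, 0, by ring, ?_⟩
    subst ha
    nlinarith
  · have hane : a ≠ 0 := by omega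
    have hgpos : 0 < Int.gcd a c := Int.gcd_pos_of_ne_zero_left c hane
    set g : ℤ := (Int.gcd a c : ℤ) with hg
    have hgpos' : 0 < g := by rw [hg]; exact_mod_cast hgpos
    obtain ⟨a1, ha1⟩ : g ∣ a := Int.gcd_dvd_left a c
    obtain ⟨c1, hc1⟩ : g ∣ c := Int.gcd_dvd_right a c
    have hcop : IsCoprime c1 a1 := by
      have h2 := Int.gcd_div_gcd_div_gcd (i := a) (j := c) hgpos
      have e1 : a / g = a1 := by rw [ha1]; exact Int.mul_ediv_cancel_left _ (ne_of_gt hgpos')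
      have e2 : c / g = c1 := by rw [hc1]; exact Int.mul_ediv_cancel_left _ (ne_of_gt hgpos')
      rw [← hg, e1, e2] at h2
      rw [Int.isCoprime_iff_gcd_eq_one, Int.gcd_comm]
      exact h2
    obtain ⟨uu, vv, huv⟩ := hcop
    refine ⟨-c1, a1, -vv, -uu, by linarith [huv], ?_⟩
    have hval : g^2*(a*(-c1)^2 + 2*c*(-c1*a1) + b*a1^2) = a*(a*b - c^2) := by
      rw [ha1, hc1]; ring
    have h2 : g^2*(a*(-c1)^2 + 2*c*(-c1*a1) + b*a1^2) < 0 := by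
      rw [hval]; nlinarith
    nlinarith [pow_pos hgpos' 2]

theorem stmt_7 (Λ : Type*) [AddCommGroup Λ] [Module ℤ Λ]
    (B : Λ →ₗ[ℤ] Λ →ₗ[ℤ] ℤ)
    (hsymm : ∀ x y, B x y = B y x)
    (heven : ∀ x, Even (B x x))
    (bas : Module.Basis (Fin 2) ℤ Λ)
    (hsig : B (bas 0) (bas 0) * B (bas 1) (bas 1) - (B (bas 0) (bas 1)) ^ 2 < 0)
    (hdet : Even (B (bas 0) (bas 0) * B (bas 1) (bas 1) - (B (bas 0) (bas 1)) ^ 2)) :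
    ∃ r : ℕ, 0 < r ∧ r ≤ 6 ∧
      ∃ σ : Λ →ₗ[ℤ] (Fin (r + 1) → ℤ),
        Function.Injective σ ∧
        (∀ x y, 2 * σ x 0 * σ y 0 - 2 * ∑ i : Fin r, σ x i.succ * σ y i.succ = B x y) ∧
        (∀ (y : Fin (r + 1) → ℤ) (n : ℤ), n ≠ 0 →
          n • y ∈ LinearMap.range σ → y ∈ LinearMap.range σ) := by
  obtain ⟨a₀, hA0⟩ := heven (bas 0)
  obtain ⟨b₀, hB0'⟩ := heven (bas 1)
  have hA : B (bas 0) (bas 0) = 2*a₀ := by rw [hA0]; ring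
  have hB1 : B (bas 1) (bas 1) = 2*b₀ := by rw [hB0']; ring
  have hCeven : Even (B (bas 0) (bas 1)) := by
    rcases hdet with ⟨k, hk⟩
    have : Even ((B (bas 0) (bas 1))^2) := ⟨2*a₀*b₀ - k, by rw [hA, hB1] at hk; linarith⟩
    exact (Int.even_pow.mp this).1
  obtain ⟨c₀, hC0⟩ := hCeven
  have hC : B (bas 0) (bas 1) = 2*c₀ := by rw [hC0]; ring
  have hC' : B (bas 1) (bas 0) = 2*c₀ := by rw [hsymm]; exact hC
  have hlt : a₀ * b₀ < c₀^2 := by rw [hA, hB1, hC] at hsig; nlinarith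
  obtain ⟨p, q, s, t, hdet1, hneg⟩ := exists_neg_val a₀ b₀ c₀ hlt
  set a' : ℤ := a₀*s^2 + 2*c₀*(s*t) + b₀*t^2 with ha'
  set b' : ℤ := a₀*p^2 + 2*c₀*(p*q) + b₀*q^2 with hb'
  set c' : ℤ := a₀*(s*p) + c₀*(s*q + t*p) + b₀*(t*q) with hc'
  -- four squares
  obtain ⟨z1, z2, z3, z4, hz⟩ := Nat.sum_four_squares (-1 - b').toNat
  have hzsum : (z1:ℤ)^2 + (z2:ℤ)^2 + (z3:ℤ)^2 + (z4:ℤ)^2 = -1 - b' := by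
    have h1 : (0:ℤ) ≤ -1 - b' := by linarith
    have h2 := congrArg (fun n : ℕ => (n : ℤ)) hz
    push_cast at h2
    rw [Int.toNat_of_nonneg h1] at h2
    linarith
  -- parity
  obtain ⟨x₁, α, hx, hα⟩ : ∃ x₁ α : ℤ, x₁*x₁ = x₁ ∧ 2*α - x₁ = a' := by
    rcases Int.even_or_odd a' with ⟨k, hk⟩ | ⟨k, hk⟩
    · exact ⟨0, k, by ring, by omega⟩
    · exact ⟨1, k+1, by ring, by omega⟩
  set β : ℤ := c' + x₁ with hβ
  set u : Fin 7 → ℤ := ![1+α+x₁, 1+x₁, α+x₁, 0, 0, 0, 0] with hu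
  set v : Fin 7 → ℤ := ![β+1, 1, β+1, (z1:ℤ), (z2:ℤ), (z3:ℤ), (z4:ℤ)] with hv
  -- evaluations
  have hu0 : u 0 = 1+α+x₁ := rfl
  have hu1 : u 1 = 1+x₁ := rfl
  have hu2 : u 2 = α+x₁ := rfl
  have hv0 : v 0 = β+1 := rfl
  have hv1 : v 1 = 1 := rfl
  have hv2 : v 2 = β+1 := rfl
  -- the three pairing values
  have hPuu : Pr u u = 2*a' := by
    simp only [Pr, sum6', hu, ev5, ev6]
    simp only [Matrix.cons_val_zero, Matrix.cons_val_one, Matrix.head_cons,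
      Matrix.cons_val_two, Matrix.tail_cons, Matrix.cons_val_three, Matrix.cons_val_four]
    linear_combination 2*hα - 2*hx
  have hPuv : Pr u v = 2*c' := by
    simp only [Pr, sum6', hu, hv, ev5, ev6]
    simp only [Matrix.cons_val_zero, Matrix.cons_val_one, Matrix.head_cons,
      Matrix.cons_val_two, Matrix.tail_cons, Matrix.cons_val_three, Matrix.cons_val_four]
    linear_combination 2*hβ
  have hPvv : Pr v v = 2*b' := by
    simp only [Pr, sum6', hv, ev5, ev6]
    simp only [Matrix.cons_val_zero, Matrix.cons_val_one, Matrix.head_cons,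
      Matrix.cons_val_two, Matrix.tail_cons, Matrix.cons_val_three, Matrix.cons_val_four]
    linear_combination -2*hzsum
  -- the embedding
  set M : Matrix (Fin 7) (Fin 2) ℤ :=
    Matrix.of (fun j => ![-q * u j + t * v j, p * u j - s * v j]) with hM
  set σ : Λ →ₗ[ℤ] (Fin 7 → ℤ) := M.mulVecLin ∘ₗ bas.equivFun.toLinearMap with hσ
  have hσj : ∀ (x : Λ) (j : Fin 7),
      σ x j = (-q * bas.repr x 0 + p * bas.repr x 1) * u j
              + (t * bas.repr x 0 - s * bas.repr x 1) * v j := by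
    intro x j
    simp [hσ, hM, Matrix.mulVecLin_apply, Matrix.mulVec, dotProduct,
      Fin.sum_univ_two, Module.Basis.equivFun_apply]
    ring
  have hσfun : ∀ x : Λ, σ x = fun j =>
      (-q * bas.repr x 0 + p * bas.repr x 1) * u j
      + (t * bas.repr x 0 - s * bas.repr x 1) * v j := fun x => funext (hσj x)
  have hB2 : ∀ x y : Λ, B x y =
      (bas.repr x 0 * bas.repr y 0)*(2*a₀)
      + (bas.repr x 0 * bas.repr y 1 + bas.repr x 1 * bas.repr y 0)*(2*c₀)
      + (bas.repr x 1 * bas.repr y 1)*(2*b₀) := by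
    intro x y
    conv_lhs => rw [← bas.sum_repr x, ← bas.sum_repr y]
    simp [Fin.sum_univ_two, map_add, map_smul, LinearMap.add_apply, LinearMap.smul_apply,
      smul_eq_mul, hA, hB1, hC, hC', -Module.Basis.sum_repr]
    ring
  refine ⟨6, by norm_num, by norm_num, σ, ?_, ?_, ?_⟩
  · -- injectivity
    have hker : ∀ x : Λ, σ x = 0 → x = 0 := by
      intro x hx0
      have hcj : ∀ j : Fin 7,
          (-q * bas.repr x 0 + p * bas.repr x 1) * u j
            + (t * bas.repr x 0 - s * bas.repr x 1) * v j = 0 := by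
        intro j
        rw [← hσj x j, hx0]
        simp
      have hc0 := hcj 0
      have hc1 := hcj 1
      have hc2 := hcj 2
      rw [hu0, hv0] at hc0
      rw [hu1, hv1] at hc1
      rw [hu2, hv2] at hc2
      have hxi : -q * bas.repr x 0 + p * bas.repr x 1 = 0 := by
        linear_combination hc0 - hc2
      have heta : t * bas.repr x 0 - s * bas.repr x 1 = 0 := by
        linear_combination hc1 - (1+x₁) * hxi
      have hX0z : bas.repr x 0 = 0 := by
        linear_combination (-(bas.repr x 0)) * hdet1 + s * hxi + p * heta
      have hX1z : bas.repr x 1 = 0 := by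
        linear_combination (-(bas.repr x 1)) * hdet1 + t * hxi + q * heta
      have : bas.equivFun x = bas.equivFun 0 := by
        funext j
        fin_cases j <;> simp [Module.Basis.equivFun_apply, hX0z, hX1z]
      exact bas.equivFun.injective this
    intro x y hxy
    have h1 : x - y = 0 := hker _ (by rw [map_sub, hxy, sub_self])
    exact sub_eq_zero.mp h1
  · -- Gram matrix condition
    intro x y
    show Pr (σ x) (σ y) = B x y
    rw [hσfun x, hσfun y, Pr_bilin, hPuu, hPuv, hPvv, hB2 x y]
    linear_combination
      (2*(p*t - q*s + 1)*(bas.repr x 0 * bas.repr y 0 * a₀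
        + (bas.repr x 0 * bas.repr y 1 + bas.repr x 1 * bas.repr y 0) * c₀
        + bas.repr x 1 * bas.repr y 1 * b₀)) * hdet1
      + (2*(-q * bas.repr x 0 + p * bas.repr x 1)*(-q * bas.repr y 0 + p * bas.repr y 1)) * ha'
      + (2*((-q * bas.repr x 0 + p * bas.repr x 1)*(t * bas.repr y 0 - s * bas.repr y 1)
        + (t * bas.repr x 0 - s * bas.repr x 1)*(-q * bas.repr y 0 + p * bas.repr y 1))) * hc'
      + (2*(t * bas.repr x 0 - s * bas.repr x 1)*(t * bas.repr y 0 - s * bas.repr y 1)) * hb'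
  · -- saturation
    rintro y n hn ⟨x, hx⟩
    have hcomp : ∀ j : Fin 7,
        (-q * bas.repr x 0 + p * bas.repr x 1) * u j
          + (t * bas.repr x 0 - s * bas.repr x 1) * v j = n * y j := by
      intro j
      rw [← hσj x j, hx]
      simp
    have hxi : -q * bas.repr x 0 + p * bas.repr x 1 = n * (y 0 - y 2) := by
      have h0 := hcomp 0
      have h2 := hcomp 2
      rw [hu0, hv0] at h0
      rw [hu2, hv2] at h2
      linear_combination h0 - h2
    have heta : t * bas.repr x 0 - s * bas.repr x 1 = n * (y 1 - (1+x₁) * (y 0 - y 2)) := by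
      have h1 := hcomp 1
      rw [hu1, hv1] at h1
      linear_combination h1 - (1+x₁) * hxi
    have hyj : ∀ j : Fin 7, y j = (y 0 - y 2) * u j + (y 1 - (1+x₁) * (y 0 - y 2)) * v j := by
      intro j
      have hcj := hcomp j
      apply mul_left_cancel₀ hn
      linear_combination (u j) * hxi + (v j) * heta - hcj
    refine ⟨bas.equivFun.symm ![s*(y 0 - y 2) + p*(y 1 - (1+x₁) * (y 0 - y 2)), t*(y 0 - y 2) + q*(y 1 - (1+x₁) * (y 0 - y 2))], ?_⟩
    have hr0 : bas.repr (bas.equivFun.symm ![s*(y 0 - y 2) + p*(y 1 - (1+x₁) * (y 0 - y 2)), t*(y 0 - y 2) + q*(y 1 - (1+x₁) * (y 0 - y 2))]) 0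
        = s*(y 0 - y 2) + p*(y 1 - (1+x₁) * (y 0 - y 2)) := by
      have h3 := bas.equivFun.apply_symm_apply ![s*(y 0 - y 2) + p*(y 1 - (1+x₁) * (y 0 - y 2)), t*(y 0 - y 2) + q*(y 1 - (1+x₁) * (y 0 - y 2))]
      have h2 := congrFun h3 0
      rw [Module.Basis.equivFun_apply] at h2
      simpa using h2
    have hr1 : bas.repr (bas.equivFun.symm ![s*(y 0 - y 2) + p*(y 1 - (1+x₁) * (y 0 - y 2)), t*(y 0 - y 2) + q*(y 1 - (1+x₁) * (y 0 - y 2))]) 1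
        = t*(y 0 - y 2) + q*(y 1 - (1+x₁) * (y 0 - y 2)) := by
      have h3 := bas.equivFun.apply_symm_apply ![s*(y 0 - y 2) + p*(y 1 - (1+x₁) * (y 0 - y 2)), t*(y 0 - y 2) + q*(y 1 - (1+x₁) * (y 0 - y 2))]
      have h2 := congrFun h3 1
      rw [Module.Basis.equivFun_apply] at h2
      simpa using h2
    funext j
    rw [hσj _ j, hr0, hr1, hyj j]
    linear_combination ((u j) * (y 0 - y 2) + (v j) * (y 1 - (1+x₁) * (y 0 - y 2))) * hdet1
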